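/- For the random-coefficient AR(1) model $y_t = c\,y_{t-1} + u_t$ with conditional stationary distribution $y_t \mid c \sim N(0, 1/(1-c^2))$ and $\beta_0 = \mathbb{E}[c/(1-c^2)]/\mathbb{E}[1/(1-c^2)]$: defining $\epsilon_t = y_t - \beta_0 y_{t-1}$, one has $\mathbb{E}[y_{t-1}\epsilon_t \mid c] = (c - \beta_0)/(1-c^2)$ almost surely, which is nonzero almost surely whenever $c$ has a continuous (atomless) distribution. -/

import Mathlib

open MeasureTheory ProbabilityTheory Filter Set Real
open scoped NNReal ENNReal

lemma aux_int_sq_exp {b : ℝ} (hb : 0 < b) :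
    Integrable fun x : ℝ => x ^ 2 * Real.exp (-b * x ^ 2) := by
  have h := integrable_rpow_mul_exp_neg_mul_sq hb (s := 2) (by norm_num)
  have h2 : ∀ x : ℝ, x ^ (2:ℝ) = x ^ 2 := fun x => by
    rw [show (2:ℝ) = ((2:ℕ):ℝ) by norm_num, Real.rpow_natCast]
  simpa [h2] using h

lemma aux_integral_sq_exp {b : ℝ} (hb : 0 < b) :
    ∫ x : ℝ, x ^ 2 * Real.exp (-b * x ^ 2) = Real.sqrt (π / b) / (2 * b) := by
  have hb2 : (2 * b) ≠ 0 := by positivity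
  have hderiv : ∀ x : ℝ, HasDerivAt (fun x : ℝ => -(2*b)⁻¹ * (x * Real.exp (-b * x ^ 2)))
      (x ^ 2 * Real.exp (-b * x ^ 2) - (2*b)⁻¹ * Real.exp (-b * x ^ 2)) x := by
    intro x
    have h1 : HasDerivAt (fun x : ℝ => x * Real.exp (-b * x ^ 2))
        (1 * Real.exp (-b * x ^ 2) + x * (Real.exp (-b * x ^ 2) * (-b * (2 * x ^ 1)))) x :=
      (hasDerivAt_id x).mul (((hasDerivAt_pow 2 x).const_mul (-b)).exp)
    have h2 := h1.const_mul (-(2*b)⁻¹)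
    convert h2 using 1
    · rfl
    · rfl
    have hb' : b ≠ 0 := ne_of_gt hb
    field_simp
    ring
  have hint : IntegrableOn (fun x : ℝ => x ^ 2 * Real.exp (-b * x ^ 2)
      - (2*b)⁻¹ * Real.exp (-b * x ^ 2)) (Ioi 0) :=
    ((aux_int_sq_exp hb).sub ((integrable_exp_neg_mul_sq hb).const_mul _)).integrableOn
  have htend : Tendsto (fun x : ℝ => -(2*b)⁻¹ * (x * Real.exp (-b * x ^ 2))) atTop (nhds 0) := by
    have h0 : Tendsto (fun x : ℝ => x * Real.exp (-b * x ^ 2)) atTop (nhds 0) := by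
      have hlo := rpow_mul_exp_neg_mul_sq_isLittleO_exp_neg hb 1
      have hg : Tendsto (fun x : ℝ => Real.exp (-(1/2) * x)) atTop (nhds 0) :=
        Real.tendsto_exp_atBot.comp
          (tendsto_id.const_mul_atTop_of_neg (by norm_num : (-(1/2):ℝ) < 0))
      have := hlo.tendsto_zero_of_tendsto hg
      simpa [Real.rpow_one] using this
    simpa using h0.const_mul (-(2*b)⁻¹)
  have key := integral_Ioi_of_hasDerivAt_of_tendsto' (fun x _ => hderiv x) hint htend
  simp only [mul_zero, zero_mul, neg_zero, sub_zero, zero_sub, neg_neg, zero_pow] at key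
  -- key : ∫ x in Ioi 0, (x^2 * e - (2b)⁻¹ * e) = ... should be 0
  have hIoi : ∫ x in Ioi (0:ℝ), x ^ 2 * Real.exp (-b * x ^ 2)
      = (2*b)⁻¹ * (Real.sqrt (π / b) / 2) := by
    have hs := integral_sub ((aux_int_sq_exp hb).integrableOn)
      (((integrable_exp_neg_mul_sq hb).const_mul ((2*b)⁻¹)).integrableOn (s := Ioi 0))
    rw [hs] at key
    have hg : ∫ x in Ioi (0:ℝ), (2*b)⁻¹ * Real.exp (-b * x ^ 2)
        = (2*b)⁻¹ * (Real.sqrt (π / b) / 2) := by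
      rw [integral_const_mul, integral_gaussian_Ioi]
    linarith [key, hg]
  have heven : ∫ x : ℝ, x ^ 2 * Real.exp (-b * x ^ 2)
      = 2 * ∫ x in Ioi (0:ℝ), x ^ 2 * Real.exp (-b * x ^ 2) := by
    rw [← integral_comp_abs (f := fun x => x ^ 2 * Real.exp (-b * x ^ 2))]
    congr 1
    funext x
    rw [sq_abs]
  rw [heven, hIoi]
  field_simp

lemma aux_gauss_transfer_integrable {V : ℝ≥0} (hV : V ≠ 0) {g : ℝ → ℝ}
    (hint : Integrable (fun x => gaussianPDFReal 0 V x * g x)) :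
    Integrable g (gaussianReal 0 V) := by
  rw [gaussianReal_of_var_ne_zero 0 hV]
  have h0 : (volume.withDensity (gaussianPDF 0 V))
      = volume.withDensity (fun x => ((Real.toNNReal (gaussianPDFReal 0 V x) : ℝ≥0) : ℝ≥0∞)) :=
    rfl
  rw [h0, integrable_withDensity_iff_integrable_smul
    ((measurable_gaussianPDFReal 0 V).real_toNNReal)]
  have hps : ∀ x, (Real.toNNReal (gaussianPDFReal 0 V x) : ℝ≥0) • g x
      = gaussianPDFReal 0 V x * g x := fun x => by
    rw [NNReal.smul_def, Real.coe_toNNReal _ (gaussianPDFReal_nonneg 0 V x), smul_eq_mul]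
  simp_rw [hps]
  exact hint

lemma aux_gauss_integral {V : ℝ≥0} (hV : V ≠ 0) (g : ℝ → ℝ) :
    ∫ x, g x ∂(gaussianReal 0 V) = ∫ x, gaussianPDFReal 0 V x * g x := by
  rw [gaussianReal_of_var_ne_zero 0 hV]
  have h0 : (volume.withDensity (gaussianPDF 0 V))
      = volume.withDensity (fun x => ((Real.toNNReal (gaussianPDFReal 0 V x) : ℝ≥0) : ℝ≥0∞)) :=
    rfl
  rw [h0, integral_withDensity_eq_integral_smul
    ((measurable_gaussianPDFReal 0 V).real_toNNReal) g]
  congr 1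
  funext x
  rw [NNReal.smul_def, Real.coe_toNNReal _ (gaussianPDFReal_nonneg 0 V x), smul_eq_mul]

lemma aux_pdf_sq_eq (V : ℝ≥0) : ∀ x : ℝ, gaussianPDFReal 0 V x * x ^ 2
    = (Real.sqrt (2*π*V))⁻¹ * (x ^ 2 * Real.exp (-(2*(V:ℝ))⁻¹ * x ^ 2)) := by
  intro x
  rw [gaussianPDFReal_def]
  have h : -(x - 0) ^ 2 / (2*(V:ℝ)) = -(2*(V:ℝ))⁻¹ * x ^ 2 := by ring
  simp only [h]
  ring

lemma aux_gauss_sq_integrable (V : ℝ≥0) : Integrable (fun x : ℝ => x ^ 2) (gaussianReal 0 V) := by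
  by_cases hV : V = 0
  · subst hV
    rw [gaussianReal_zero_var]
    refine ⟨(measurable_id.pow_const 2).aestronglyMeasurable, ?_⟩
    have : HasFiniteIntegral (fun x : ℝ => x ^ 2) (Measure.dirac 0) := by
      simp only [HasFiniteIntegral, lintegral_dirac]
      exact ENNReal.coe_lt_top
    exact this
  · have hVpos : (0:ℝ) < V := by exact_mod_cast pos_iff_ne_zero.mpr hV
    have hb : 0 < (2*(V:ℝ))⁻¹ := by positivity
    apply aux_gauss_transfer_integrable hV
    simp_rw [aux_pdf_sq_eq V]
    exact (aux_int_sq_exp hb).const_mul _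

lemma aux_gauss_sq_integral (V : ℝ≥0) : ∫ x, x ^ 2 ∂(gaussianReal 0 V) = V := by
  by_cases hV : V = 0
  · subst hV
    rw [gaussianReal_zero_var, integral_dirac]
    simp
  · have hVpos : (0:ℝ) < V := by exact_mod_cast pos_iff_ne_zero.mpr hV
    have hb : 0 < (2*(V:ℝ))⁻¹ := by positivity
    rw [aux_gauss_integral hV]
    simp_rw [aux_pdf_sq_eq V]
    rw [integral_const_mul, aux_integral_sq_exp hb]
    have h1 : π / (2*(V:ℝ))⁻¹ = 2*π*(V:ℝ) := by field_simp
    rw [h1]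
    have h2 : (0:ℝ) < Real.sqrt (2*π*(V:ℝ)) := Real.sqrt_pos.mpr (by positivity)
    field_simp

lemma aux_gauss_id_integrable : Integrable (fun x : ℝ => x) (gaussianReal 0 1) := by
  apply aux_gauss_transfer_integrable one_ne_zero
  have heq : ∀ x : ℝ, gaussianPDFReal 0 1 x * x
      = (Real.sqrt (2*π*((1:ℝ≥0):ℝ)))⁻¹ * (x * Real.exp (-(2:ℝ)⁻¹ * x ^ 2)) := by
    intro x
    rw [gaussianPDFReal_def]
    have h : -(x - 0) ^ 2 / (2*((1:ℝ≥0):ℝ)) = -(2:ℝ)⁻¹ * x ^ 2 := by norm_num; ring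
    simp only [h]
    ring
  simp_rw [heq]
  exact (integrable_mul_exp_neg_mul_sq (by norm_num : (0:ℝ) < 2⁻¹)).const_mul _

lemma aux_gauss_id_integral (V : ℝ≥0) : ∫ x, x ∂(gaussianReal 0 V) = 0 := by
  have hmap : (gaussianReal 0 V).map (fun x : ℝ => -1 * x) = gaussianReal 0 V := by
    have h := gaussianReal_map_const_mul (μ := 0) (v := V) (-1)
    norm_num at h
    convert h using 2
    ext
    norm_num
  have h1 : ∫ x, x ∂(gaussianReal 0 V) = ∫ x, -1 * x ∂(gaussianReal 0 V) := by
    nth_rewrite 1 [← hmap]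
    exact integral_map (f := fun y : ℝ => y) (by fun_prop) measurable_id.aestronglyMeasurable
  simp only [neg_one_mul] at h1
  rw [integral_neg] at h1
  linarith

lemma aux_gauss_sq_lintegral (V : ℝ≥0) :
    ∫⁻ x, ENNReal.ofReal (x ^ 2) ∂(gaussianReal 0 V) = V := by
  rw [← ofReal_integral_eq_lintegral_ofReal (aux_gauss_sq_integrable V)
    (ae_of_all _ fun x => sq_nonneg x), aux_gauss_sq_integral]
  exact ENNReal.ofReal_coe_nnreal



open MeasureTheory ProbabilityTheory Filter

/-- Random-coefficient AR(1): with `ε_t = y_t - β₀ y_{t-1}`,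
`E[y_{t-1} ε_t ∣ c] = (c - β₀)/(1 - c²)` a.s., which is a.s. nonzero whenever the
distribution of `c` is atomless. -/
theorem stmt8 {Ω : Type*} [mΩ : MeasurableSpace Ω] [StandardBorelSpace Ω]
    (μ : Measure Ω) [IsProbabilityMeasure μ]
    (y u : ℤ → Ω → ℝ) (c : Ω → ℝ) (t : ℤ)
    (hc : Measurable c) (hyM : ∀ s, Measurable (y s)) (huM : ∀ s, Measurable (u s))
    (hcbd : ∀ᵐ ω ∂μ, |c ω| < 1)
    (hcint : Integrable (fun ω => 1 / (1 - (c ω) ^ 2)) μ)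
    (hmodel : ∀ ω, y t ω = c ω * y (t - 1) ω + u t ω)
    (hu_gauss : Measure.map (u t) μ = gaussianReal 0 1)
    (hu_indep : IndepFun (u t) (fun ω => (c ω, y (t - 1) ω)) μ)
    (hstat : ∀ᵐ ω ∂μ, condDistrib (y (t - 1)) c μ (c ω) =
      gaussianReal 0 (Real.toNNReal (1 / (1 - (c ω) ^ 2))))
    (mc : MeasurableSpace Ω) (hmc : mc = MeasurableSpace.comap c inferInstance)
    (β0 : ℝ)
    (hβ0 : β0 = (∫ ω, c ω / (1 - (c ω) ^ 2) ∂μ) / ∫ ω, 1 / (1 - (c ω) ^ 2) ∂μ)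
    (ε : Ω → ℝ) (hε : ∀ ω, ε ω = y t ω - β0 * y (t - 1) ω) :
    (MeasureTheory.condExp (m₀ := mΩ) mc μ (fun ω => y (t - 1) ω * ε ω) =ᵐ[μ]
      fun ω => (c ω - β0) / (1 - (c ω) ^ 2)) ∧
    ((∀ x : ℝ, μ {ω | c ω = x} = 0) →
      ∀ᵐ ω ∂μ, (c ω - β0) / (1 - (c ω) ^ 2) ≠ 0) := by
  subst hmc
  have hY := hyM (t - 1)
  set Y := y (t - 1) with hYdef
  -- part 2
  have part2 : (∀ x : ℝ, μ {ω | c ω = x} = 0) →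
      ∀ᵐ ω ∂μ, (c ω - β0) / (1 - (c ω) ^ 2) ≠ 0 := by
    intro h
    have h1 : ∀ᵐ ω ∂μ, c ω ≠ β0 := by
      rw [ae_iff]
      simp only [ne_eq, not_not]
      exact h β0
    filter_upwards [hcbd, h1] with ω h2 h3
    have h4 : (0:ℝ) < 1 - c ω ^ 2 := by nlinarith [(abs_lt.mp h2).1, (abs_lt.mp h2).2]
    exact div_ne_zero (sub_ne_zero.mpr h3) (ne_of_gt h4)
  -- integrability of Y^2
  haveI : IsProbabilityMeasure (μ.map (fun ω => (c ω, Y ω))) :=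
    Measure.isProbabilityMeasure_map ((hc.prodMk hY).aemeasurable)
  haveI : IsProbabilityMeasure (μ.map c) := Measure.isProbabilityMeasure_map hc.aemeasurable
  have hmapeq : (μ.map fun ω => (c ω, Y ω)) = (μ.map c) ⊗ₘ condDistrib Y c μ := by
    exact (compProd_map_condDistrib hY.aemeasurable).symm
  have hm1 : Measurable (fun p : ℝ × ℝ => ENNReal.ofReal (p.2 ^ 2)) :=
    (measurable_snd.pow_const 2).ennreal_ofReal
  have hY2 : Integrable (fun ω => Y ω ^ 2) μ := by
    have hker : Measurable (fun x => ∫⁻ v, ENNReal.ofReal (v ^ 2) ∂(condDistrib Y c μ x)) :=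
      Measurable.lintegral_kernel_prod_right' (κ := condDistrib Y c μ)
        (f := fun p : ℝ × ℝ => ENNReal.ofReal (p.2 ^ 2)) hm1
    have key : ∫⁻ ω, ENNReal.ofReal (Y ω ^ 2) ∂μ
        = ∫⁻ ω, ENNReal.ofReal (1 / (1 - c ω ^ 2)) ∂μ := by
      calc ∫⁻ ω, ENNReal.ofReal (Y ω ^ 2) ∂μ
          = ∫⁻ p, ENNReal.ofReal (p.2 ^ 2) ∂(μ.map fun ω => (c ω, Y ω)) :=
            (lintegral_map hm1 (hc.prodMk hY)).symm
        _ = ∫⁻ x, ∫⁻ v, ENNReal.ofReal (v ^ 2) ∂(condDistrib Y c μ x) ∂(μ.map c) := by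
            rw [hmapeq, Measure.lintegral_compProd hm1]
        _ = ∫⁻ ω, ∫⁻ v, ENNReal.ofReal (v ^ 2) ∂(condDistrib Y c μ (c ω)) ∂μ :=
            lintegral_map hker hc
        _ = ∫⁻ ω, ENNReal.ofReal (1 / (1 - c ω ^ 2)) ∂μ := by
            refine lintegral_congr_ae ?_
            filter_upwards [hstat] with ω h1
            rw [h1, aux_gauss_sq_lintegral]
            rfl
    refine ⟨(hY.pow_const 2).aestronglyMeasurable, ?_⟩
    have hfin : (∫⁻ ω, ‖Y ω ^ 2‖ₑ ∂μ) < ⊤ := by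
      calc ∫⁻ ω, ‖Y ω ^ 2‖ₑ ∂μ
          = ∫⁻ ω, ENNReal.ofReal (1 / (1 - c ω ^ 2)) ∂μ := by
            simp_rw [fun ω => (Real.enorm_eq_ofReal (sq_nonneg (Y ω)))]
            exact key
        _ ≤ ∫⁻ ω, ‖1 / (1 - c ω ^ 2)‖ₑ ∂μ :=
            lintegral_mono fun ω => Real.ofReal_le_enorm _
        _ < ⊤ := hcint.2
    exact hfin
  -- more integrability
  have hYint : Integrable Y μ := by
    refine Integrable.mono' ((integrable_const (1:ℝ)).add hY2) hY.aestronglyMeasurable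
      (ae_of_all _ fun ω => ?_)
    simp only [Pi.add_apply]
    rw [Real.norm_eq_abs]
    nlinarith [sq_abs (Y ω), sq_nonneg (|Y ω| - 1), abs_nonneg (Y ω)]
  have hAint : Integrable (fun ω => (c ω - β0) * Y ω ^ 2) μ := by
    refine Integrable.mono' (hY2.const_mul (1 + |β0|))
      (((hc.sub measurable_const).mul (hY.pow_const 2)).aestronglyMeasurable) ?_
    filter_upwards [hcbd] with ω h2
    rw [Real.norm_eq_abs, abs_mul, abs_of_nonneg (sq_nonneg (Y ω))]
    have h5 : |c ω - β0| ≤ 1 + |β0| := (abs_sub _ _).trans (by linarith)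
    exact mul_le_mul_of_nonneg_right h5 (sq_nonneg _)
  have huint : Integrable (u t) μ := by
    have h1 : Integrable (fun x : ℝ => x) (μ.map (u t)) := by
      rw [hu_gauss]; exact aux_gauss_id_integrable
    exact (integrable_map_measure (g := fun x : ℝ => x) measurable_id.aestronglyMeasurable
      (huM t).aemeasurable).mp h1
  have hindepYu : IndepFun Y (u t) μ := (hu_indep.comp measurable_id measurable_snd).symm
  have hBint : Integrable (Y * u t) μ := hindepYu.integrable_mul hYint huint
  have hBint' : Integrable (fun ω => Y ω * u t ω) μ := hBint
  -- the sigma-algebra m2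
  have hm2le : MeasurableSpace.comap (fun ω => (c ω, Y ω)) inferInstance ≤ mΩ :=
    (hc.prodMk hY).comap_le
  have hmcle : MeasurableSpace.comap c inferInstance
      ≤ MeasurableSpace.comap (fun ω => (c ω, Y ω)) inferInstance := by
    calc MeasurableSpace.comap c inferInstance
        = MeasurableSpace.comap (fun ω => (c ω, Y ω))
            (MeasurableSpace.comap Prod.fst inferInstance) :=
          (MeasurableSpace.comap_comp (g := fun ω => (c ω, Y ω)) (f := Prod.fst)).symm
      _ ≤ MeasurableSpace.comap (fun ω => (c ω, Y ω)) inferInstance :=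
          MeasurableSpace.comap_mono measurable_fst.comap_le
  -- E[u | MeasurableSpace.comap (fun ω => (c ω, Y ω)) inferInstance] = 0
  have hum2 : (μ[u t | MeasurableSpace.comap (fun ω => (c ω, Y ω)) inferInstance]) =ᵐ[μ] fun _ => (0:ℝ) := by
    have hindep2 : Indep (MeasurableSpace.comap (u t) inferInstance)
        (MeasurableSpace.comap (fun ω => (c ω, Y ω)) inferInstance) μ := hu_indep
    have h0 := condExp_indep_eq (μ := μ) (huM t).comap_le hm2le
      (Measurable.stronglyMeasurable (measurable_iff_comap_le.mpr le_rfl)) hindep2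
    refine h0.trans ?_
    have hmean : ∫ ω, u t ω ∂μ = 0 := by
      have h1 : ∫ x, (fun x : ℝ => x) x ∂(μ.map (u t)) = ∫ ω, u t ω ∂μ :=
        integral_map (huM t).aemeasurable measurable_id.aestronglyMeasurable
      rw [← h1, hu_gauss, aux_gauss_id_integral]
    rw [hmean]
  have hYm2 : StronglyMeasurable[MeasurableSpace.comap (fun ω => (c ω, Y ω)) inferInstance] Y := by
    have hp : Measurable[MeasurableSpace.comap (fun ω => (c ω, Y ω)) inferInstance]
        (fun ω => (c ω, Y ω)) := measurable_iff_comap_le.mpr le_rfl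
    exact (measurable_snd.comp hp).stronglyMeasurable
  have hBm2 : (μ[Y * u t | MeasurableSpace.comap (fun ω => (c ω, Y ω)) inferInstance]) =ᵐ[μ] 0 := by
    have h1 := condExp_mul_of_stronglyMeasurable_left hYm2 hBint huint
    refine h1.trans ?_
    filter_upwards [hum2] with ω hω
    simp only [Pi.mul_apply, hω, mul_zero, Pi.zero_apply]
  have hB : (μ[(fun ω => Y ω * u t ω) | MeasurableSpace.comap c inferInstance]) =ᵐ[μ] 0 := by
    have h2 := condExp_condExp_of_le (μ := μ) (f := Y * u t) hmcle hm2le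
    refine h2.symm.trans ?_
    refine (condExp_congr_ae hBm2).trans ?_
    rw [condExp_zero]
  -- term A
  have hA : (μ[(fun ω => (c ω - β0) * Y ω ^ 2) | MeasurableSpace.comap c inferInstance]) =ᵐ[μ]
      fun ω => (c ω - β0) / (1 - c ω ^ 2) := by
    have hfsm : StronglyMeasurable (fun p : ℝ × ℝ => (p.1 - β0) * p.2 ^ 2) :=
      ((measurable_fst.sub measurable_const).mul (measurable_snd.pow_const 2)).stronglyMeasurable
    have h1 := condExp_prod_ae_eq_integral_condDistrib (μ := μ) hc hY.aemeasurable hfsm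
      (by exact hAint)
    refine h1.trans ?_
    filter_upwards [hstat, hcbd] with ω h2 h3
    rw [h2, integral_const_mul, aux_gauss_sq_integral]
    have h4 : (0:ℝ) < 1 - c ω ^ 2 := by nlinarith [(abs_lt.mp h3).1, (abs_lt.mp h3).2]
    rw [Real.coe_toNNReal _ (by positivity : (0:ℝ) ≤ 1 / (1 - c ω ^ 2)), mul_one_div]
  -- combine
  have hrw : (fun ω => Y ω * ε ω) = fun ω => (c ω - β0) * Y ω ^ 2 + Y ω * u t ω := by
    funext ω
    rw [hε, hmodel]
    ring
  refine ⟨?_, part2⟩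
  rw [hrw]
  have hadd := condExp_add (μ := μ) (m := MeasurableSpace.comap c inferInstance) hAint hBint'
  refine hadd.trans ?_
  filter_upwards [hA, hB] with ω h1 h2
  simp only [Pi.add_apply, h1, h2, Pi.zero_apply, add_zero]
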